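/- The k-stance satisfies the polyhedron inequality: for any k+1 sequences w_0,...,w_k in A^l with k > 2, d_k(w_0,...,w_{k-1}) ≤ Σ_{i=0}^{k-1} d_k(w_0,...,ŵ_i,...,w_k), where ŵ_i denotes omission of the i-th sequence from the tuple (w_0,...,w_k). -/

import Mathlib

def stance {A : Type*} [DecidableEq A] {k l : ℕ} (w : Fin k → Fin l → A) : ℕ :=
  (Finset.univ.filter fun j : Fin l => Function.Injective fun i : Fin k => w i j).card

lemma stance_key {A : Type*} [DecidableEq A] {k : ℕ} (hk : 0 < k) (a : Fin (k + 1) → A)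
    (ha : Function.Injective fun i : Fin k => a i.castSucc) :
    ∃ i : Fin k, Function.Injective
      fun m : Fin k => a ((i.castSucc : Fin (k + 1)).succAbove m) := by
  by_cases h : ∃ i : Fin k, a (Fin.last k) = a i.castSucc
  · obtain ⟨i, hi⟩ := h
    refine ⟨i, ?_⟩
    intro m m' hmm
    simp only at hmm
    set p : Fin (k + 1) := i.castSucc with hp
    -- helper: any x ≠ p has index b x with a x = a (b x).castSucc
    have key : ∀ x : Fin (k + 1), x ≠ p → ∃ r : Fin k,
        a x = a r.castSucc ∧ ∀ y : Fin (k + 1), y ≠ p → a y = a r.castSucc → y = x := by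
      intro x hx
      rcases eq_or_ne x (Fin.last k) with rfl | hxl
      · refine ⟨i, hi, ?_⟩
        intro y hy hay
        rcases eq_or_ne y (Fin.last k) with rfl | hyl
        · rfl
        · obtain ⟨s, rfl⟩ := Fin.exists_castSucc_eq.mpr hyl
          exact absurd (congrArg Fin.castSucc (ha hay)) hy
      · obtain ⟨r, rfl⟩ := Fin.exists_castSucc_eq.mpr hxl
        refine ⟨r, rfl, ?_⟩
        intro y hy hay
        rcases eq_or_ne y (Fin.last k) with rfl | hyl
        · rw [hi] at hay
          exact absurd (congrArg Fin.castSucc (ha hay)).symm hx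
        · obtain ⟨s, rfl⟩ := Fin.exists_castSucc_eq.mpr hyl
          exact congrArg Fin.castSucc (ha hay)
    obtain ⟨r, har, hr⟩ := key (p.succAbove m) (Fin.succAbove_ne p m)
    have := hr (p.succAbove m') (Fin.succAbove_ne p m') (hmm ▸ har)
    exact (Fin.succAbove_right_injective this).symm
  · push_neg at h
    refine ⟨⟨0, hk⟩, ?_⟩
    intro m m' hmm
    simp only at hmm
    set p : Fin (k + 1) := Fin.castSucc ⟨0, hk⟩
    have key : ∀ x y : Fin (k + 1), a x = a y → x = y := by
      intro x y hxy
      rcases eq_or_ne x (Fin.last k) with rfl | hxl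
      · rcases eq_or_ne y (Fin.last k) with rfl | hyl
        · rfl
        · obtain ⟨s, rfl⟩ := Fin.exists_castSucc_eq.mpr hyl
          exact absurd hxy (h s)
      · obtain ⟨r, rfl⟩ := Fin.exists_castSucc_eq.mpr hxl
        rcases eq_or_ne y (Fin.last k) with rfl | hyl
        · exact absurd hxy.symm (h r)
        · obtain ⟨s, rfl⟩ := Fin.exists_castSucc_eq.mpr hyl
          exact congrArg Fin.castSucc (ha hxy)
    exact Fin.succAbove_right_injective (key _ _ hmm)

/-- Polyhedron inequality: for `k + 1` sequences `w 0, …, w k` (with `k > 2`),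
the `k`-stance of the first `k` sequences is at most the sum over `i < k` of the
`k`-stances of the tuples obtained by omitting the `i`-th sequence. -/
theorem stance_polyhedron {A : Type*} [DecidableEq A] {k l : ℕ} (hk : 2 < k)
    (w : Fin (k + 1) → Fin l → A) :
    stance (fun i : Fin k => w i.castSucc) ≤
      ∑ i : Fin k, stance (fun m : Fin k => w ((i.castSucc : Fin (k + 1)).succAbove m)) := by
  unfold stance
  calc (Finset.univ.filter fun j : Fin l =>
          Function.Injective fun i : Fin k => w i.castSucc j).card
      ≤ (Finset.univ.biUnion fun i : Fin k => Finset.univ.filter fun j : Fin l =>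
          Function.Injective fun m : Fin k =>
            w ((i.castSucc : Fin (k + 1)).succAbove m) j).card := by
        apply Finset.card_le_card
        intro j hj
        simp only [Finset.mem_filter, Finset.mem_univ, true_and] at hj
        obtain ⟨i, hi⟩ := stance_key (by omega) (fun x => w x j) hj
        simp only [Finset.mem_biUnion, Finset.mem_filter, Finset.mem_univ, true_and]
        exact ⟨i, hi⟩
    _ ≤ _ := Finset.card_biUnion_le
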